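/- arXiv:2504.19904 — 2 statements merged into one kernel-verified Lean document; each statement's English description precedes it below -/
import Mathlib

section
/- Let ν ∈ (0,1), λ₁ > 0, τ = (λ₁ ν^ν (1−ν)^{1−ν})^{1/(1−ν)}, and let Q : ℝ^K → ℝ be an arbitrary function. Partition the coordinates of γ ∈ ℝ^K into m groups with blocks γ_j and weights c_j > 0. Define F(γ) = Q(γ) + λ₁ Σ_{j=1}^m c_j ‖γ_j‖₁^ν and, for θ ∈ (0,∞)^m, G(γ,θ) = Q(γ) + Σ_{j=1}^m θ_j^{1−1/ν} c_j^{1/ν} ‖γ_j‖₁ + τ Σ_{j=1}^m θ_j. Then: (i) for every γ with ‖γ_j‖₁ > 0 for all j, the infimum of G(γ,θ) over θ ∈ (0,∞)^m equals F(γ) and is attained; (ii) consequently, if (γ̂, θ̂) ∈ ℝ^K × (0,∞)^m minimizes G over all (γ,θ) with every block of γ nonzero, then γ̂ minimizes F over all γ ∈ ℝ^K whose blocks are all nonzero. -/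
open Real

lemma eq_of_log_eq {a b : ℝ} (ha : 0 < a) (hb : 0 < b) (h : Real.log a = Real.log b) : a = b := by
  rw [← Real.exp_log ha, ← Real.exp_log hb, h]

lemma key {ν lam₁ τ cj b : ℝ} (hν0 : 0 < ν) (hν1 : ν < 1) (hlam : 0 < lam₁)
    (hτ : τ = (lam₁ * ν ^ ν * (1 - ν) ^ (1 - ν)) ^ ((1 : ℝ) / (1 - ν)))
    (hc : 0 < cj) (hb : 0 < b) :
    (∀ θ : ℝ, 0 < θ → lam₁ * (cj * b ^ ν) ≤ θ ^ (1 - 1/ν) * cj ^ ((1:ℝ)/ν) * b + τ * θ) ∧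
    (∃ θ : ℝ, 0 < θ ∧ θ ^ (1 - 1/ν) * cj ^ ((1:ℝ)/ν) * b + τ * θ = lam₁ * (cj * b ^ ν)) := by
  have h1ν : 0 < 1 - ν := by linarith
  have hνne : ν ≠ 0 := ne_of_gt hν0
  have h1νne : (1:ℝ) - ν ≠ 0 := ne_of_gt h1ν
  have hXpos : 0 < lam₁ * ν ^ ν * (1 - ν) ^ (1 - ν) :=
    mul_pos (mul_pos hlam (rpow_pos_of_pos hν0 ν)) (rpow_pos_of_pos h1ν _)
  have hτpos : 0 < τ := hτ ▸ rpow_pos_of_pos hXpos _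
  have hlogτ : Real.log τ =
      (1 / (1 - ν)) * (Real.log lam₁ + ν * Real.log ν + (1 - ν) * Real.log (1 - ν)) := by
    rw [hτ, Real.log_rpow hXpos, Real.log_mul (by positivity) (by positivity),
      Real.log_mul (ne_of_gt hlam) (by positivity), Real.log_rpow hν0, Real.log_rpow h1ν]
  constructor
  · intro θ hθ
    set p₁ : ℝ := θ ^ (1 - 1/ν) * cj ^ ((1:ℝ)/ν) * b / ν with hp₁
    set p₂ : ℝ := τ * θ / (1 - ν) with hp₂
    have hp₁pos : 0 < p₁ := by
      apply div_pos _ hν0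
      exact mul_pos (mul_pos (rpow_pos_of_pos hθ _) (rpow_pos_of_pos hc _)) hb
    have hp₂pos : 0 < p₂ := div_pos (mul_pos hτpos hθ) h1ν
    have hgm := Real.geom_mean_le_arith_mean2_weighted hν0.le h1ν.le hp₁pos.le hp₂pos.le
      (by ring)
    have heq : p₁ ^ ν * p₂ ^ (1 - ν) = lam₁ * (cj * b ^ ν) := by
      apply eq_of_log_eq (by positivity) (by positivity)
      rw [Real.log_mul (by positivity) (by positivity), Real.log_rpow hp₁pos,
        Real.log_rpow hp₂pos, hp₁, hp₂,
        Real.log_div (by positivity) hνne, Real.log_div (by positivity) h1νne,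
        Real.log_mul (by positivity) (ne_of_gt hb), Real.log_mul (by positivity) (by positivity),
        Real.log_mul hτpos.ne' hθ.ne',
        Real.log_rpow hθ, Real.log_rpow hc, hlogτ,
        Real.log_mul hlam.ne' (by positivity), Real.log_mul hc.ne' (by positivity),
        Real.log_rpow hb]
      field_simp
      ring
    calc lam₁ * (cj * b ^ ν) = p₁ ^ ν * p₂ ^ (1 - ν) := heq.symm
      _ ≤ ν * p₁ + (1 - ν) * p₂ := hgm
      _ = θ ^ (1 - 1/ν) * cj ^ ((1:ℝ)/ν) * b + τ * θ := by
          rw [hp₁, hp₂]; field_simp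
  · refine ⟨(cj ^ ((1:ℝ)/ν) * b * (1 - ν) / (τ * ν)) ^ ν, rpow_pos_of_pos (by positivity) _, ?_⟩
    set θ : ℝ := (cj ^ ((1:ℝ)/ν) * b * (1 - ν) / (τ * ν)) ^ ν with hθdef
    have hθ : 0 < θ := rpow_pos_of_pos (by positivity) _
    have hlogθ : Real.log θ = ν * ((1/ν) * Real.log cj + Real.log b + Real.log (1 - ν)
        - Real.log τ - Real.log ν) := by
      rw [hθdef, Real.log_rpow (by positivity), Real.log_div (by positivity) (by positivity),
        Real.log_mul (by positivity) h1νne, Real.log_mul (by positivity) hb.ne',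
        Real.log_mul hτpos.ne' hνne, Real.log_rpow hc]
      ring
    have t1 : θ ^ (1 - 1/ν) * cj ^ ((1:ℝ)/ν) * b = ν * (lam₁ * (cj * b ^ ν)) := by
      apply eq_of_log_eq (by positivity) (by positivity)
      rw [Real.log_mul (by positivity) hb.ne', Real.log_mul (by positivity) (by positivity),
        Real.log_rpow hθ, Real.log_rpow hc, hlogθ, hlogτ,
        Real.log_mul hν0.ne' (by positivity), Real.log_mul hlam.ne' (by positivity),
        Real.log_mul hc.ne' (by positivity), Real.log_rpow hb]
      field_simp
      ring
    have t2 : τ * θ = (1 - ν) * (lam₁ * (cj * b ^ ν)) := by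
      apply eq_of_log_eq (by positivity) (by positivity)
      rw [Real.log_mul hτpos.ne' hθ.ne', hlogθ, hlogτ,
        Real.log_mul h1νne (by positivity), Real.log_mul hlam.ne' (by positivity),
        Real.log_mul hc.ne' (by positivity), Real.log_rpow hb]
      field_simp
      ring
    rw [t1, t2]; ring

/-- Group bridge reformulation (Huang et al.), used to convert the non-convex penalized
objective (Eq. 4) into the augmented objective (Eq. 6).  The coordinates of `γ : Fin K → ℝ`
are partitioned into `m` groups via `gr : Fin K → Fin m`; `bn γ j` is the ℓ₁ norm of the
`j`-th block.  With `F γ = Q γ + λ₁ ∑ j, c j * (bn γ j)^ν` and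
`G γ θ = Q γ + ∑ j, (θ j)^(1-1/ν) (c j)^(1/ν) (bn γ j) + τ ∑ j, θ j`:
(i) for every `γ` with all block norms positive, `F γ` is the attained infimum of
`G γ ·` over `θ ∈ (0,∞)^m`; (ii) if `(γ̂, θ̂)` minimizes `G` over pairs with all blocks
nonzero (and `θ` positive), then `γ̂` minimizes `F` over `γ` with all blocks nonzero. -/
theorem group_bridge_reformulation
    {K m : ℕ} (gr : Fin K → Fin m) (c : Fin m → ℝ) (hc : ∀ j, 0 < c j)
    (ν lam₁ τ : ℝ) (hν : ν ∈ Set.Ioo (0 : ℝ) 1) (hlam₁ : 0 < lam₁)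
    (hτ : τ = (lam₁ * ν ^ ν * (1 - ν) ^ (1 - ν)) ^ ((1 : ℝ) / (1 - ν)))
    (Q : (Fin K → ℝ) → ℝ)
    (bn : (Fin K → ℝ) → Fin m → ℝ)
    (hbn : ∀ γ j, bn γ j = ∑ i ∈ Finset.univ.filter (fun i => gr i = j), |γ i|)
    (F : (Fin K → ℝ) → ℝ)
    (hF : ∀ γ, F γ = Q γ + lam₁ * ∑ j, c j * (bn γ j) ^ ν)
    (G : (Fin K → ℝ) → (Fin m → ℝ) → ℝ)
    (hG : ∀ γ θ, G γ θ =
      Q γ + ∑ j, (θ j) ^ (1 - 1 / ν) * (c j) ^ ((1 : ℝ) / ν) * bn γ j + τ * ∑ j, θ j) :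
    (∀ γ : Fin K → ℝ, (∀ j, 0 < bn γ j) →
      IsLeast ((fun θ => G γ θ) '' {θ : Fin m → ℝ | ∀ j, 0 < θ j}) (F γ)) ∧
    (∀ (γhat : Fin K → ℝ) (θhat : Fin m → ℝ),
      (∀ j, bn γhat j ≠ 0) → (∀ j, 0 < θhat j) →
      (∀ (γ : Fin K → ℝ) (θ : Fin m → ℝ),
        (∀ j, bn γ j ≠ 0) → (∀ j, 0 < θ j) → G γhat θhat ≤ G γ θ) →
      ∀ γ : Fin K → ℝ, (∀ j, bn γ j ≠ 0) → F γhat ≤ F γ) := by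
  obtain ⟨hν0, hν1⟩ := hν
  have part1 : ∀ γ : Fin K → ℝ, (∀ j, 0 < bn γ j) →
      IsLeast ((fun θ => G γ θ) '' {θ : Fin m → ℝ | ∀ j, 0 < θ j}) (F γ) := by
    intro γ hpos
    constructor
    · choose θo hθo1 hθo2 using fun j => (key hν0 hν1 hlam₁ hτ (hc j) (hpos j)).2
      refine ⟨θo, fun j => hθo1 j, ?_⟩
      have hs : (∑ j, (θo j) ^ (1 - 1/ν) * (c j) ^ ((1:ℝ)/ν) * bn γ j) + τ * ∑ j, θo j
          = lam₁ * ∑ j, c j * (bn γ j) ^ ν := by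
        rw [Finset.mul_sum, Finset.mul_sum, ← Finset.sum_add_distrib]
        exact Finset.sum_congr rfl fun j _ => hθo2 j
      simp only [hG, hF]
      rw [add_assoc, hs]
    · rintro x ⟨θ, hθ, rfl⟩
      simp only [hG, hF]
      have hs : lam₁ * ∑ j, c j * (bn γ j) ^ ν
          ≤ (∑ j, (θ j) ^ (1 - 1/ν) * (c j) ^ ((1:ℝ)/ν) * bn γ j) + τ * ∑ j, θ j := by
        rw [Finset.mul_sum, Finset.mul_sum, ← Finset.sum_add_distrib]
        exact Finset.sum_le_sum fun j _ =>
          (key hν0 hν1 hlam₁ hτ (hc j) (hpos j)).1 (θ j) (hθ j)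
      linarith
  refine ⟨part1, ?_⟩
  intro γhat θhat hhat hθhat hmin γ hγ
  have hposd : ∀ δ : Fin K → ℝ, (∀ j, bn δ j ≠ 0) → ∀ j, 0 < bn δ j := by
    intro δ hδ j
    have h0 : 0 ≤ bn δ j := by
      rw [hbn]; exact Finset.sum_nonneg fun i _ => abs_nonneg _
    exact lt_of_le_of_ne h0 (Ne.symm (hδ j))
  obtain ⟨⟨θs, hθs, hGeq⟩, -⟩ := part1 γ (hposd γ hγ)
  calc F γhat ≤ G γhat θhat := (part1 γhat (hposd γhat hhat)).2 ⟨θhat, hθhat, rfl⟩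
    _ ≤ G γ θs := hmin γ θs hγ hθs
    _ = F γ := hGeq
end

section
/- Fix a design matrix Ψ ∈ ℝ^{N×K}, a partition of the K coordinates into S groups with blocks γ_g of sizes d_g, weights c_g > 0, ν ∈ (0,1), λ₁ ≥ 0, λ₂ ≥ 0, and a symmetric positive semidefinite R ∈ ℝ^{K×K}; for y ∈ ℝ^N define L_y(γ) = ‖y − Ψγ‖₂² + λ₁ Σ_{g=1}^S c_g ‖γ_g‖₁^ν + λ₂ γᵀRγ. Assume the smallest eigenvalue ρ_min of M = ΨᵀΨ + λ₂R is strictly positive. Suppose y = Ψγ* + ε where γ* ∈ ℝ^K is fixed and ε : Ω → ℝ^N is a random vector on a probability space with independent, square-integrable coordinates of mean zero and variance σ² < ∞. Let γ̂ : Ω → ℝ^K be a measurable map such that almost surely γ̂(ω) minimizes L_{y(ω)} over ℝ^K, let b(ω) = M⁻¹Ψᵀy(ω) be the ridge estimator, and suppose there is a constant η < ∞ with ( Σ_{g=1}^S d_g c_g² ‖b_g(ω)‖₁^{2(ν−1)} )^{1/2} ≤ η and b_g(ω) ≠ 0 for all g, almost surely. Then E‖γ̂ − γ*‖₂² ≤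 ( 8 λ₁² η² + 4 λ₂² ‖Rγ*‖₂² + 4 σ² ‖Ψ‖_F² ) / ρ_min². -/
open Matrix MeasureTheory ProbabilityTheory


private lemma sum_mul_le_sqrt_mul_sqrt {ι : Type*} (s : Finset ι) (f g : ι → ℝ) :
    ∑ i ∈ s, f i * g i ≤ Real.sqrt (∑ i ∈ s, f i ^ 2) * Real.sqrt (∑ i ∈ s, g i ^ 2) := by
  refine (le_abs_self _).trans ?_
  rw [← Real.sqrt_sq_eq_abs, ← Real.sqrt_mul (by positivity)]
  exact Real.sqrt_le_sqrt (Finset.sum_mul_sq_le_sq_mul_sq s f g)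

private lemma dot_mulVec_mulVec {m n : Type*} [Fintype m] [Fintype n]
    (A : Matrix m n ℝ) (x y : n → ℝ) :
    (A *ᵥ x) ⬝ᵥ (A *ᵥ y) = x ⬝ᵥ ((Aᵀ * A) *ᵥ y) := by
  rw [← Matrix.mulVec_mulVec, Matrix.dotProduct_mulVec x, Matrix.vecMul_transpose]

private lemma dot_self_nonneg {n : Type*} [Fintype n] (v : n → ℝ) : 0 ≤ v ⬝ᵥ v :=
  Finset.sum_nonneg fun i _ => mul_self_nonneg _

private lemma quad_lower_bound {K : ℕ} {M : Matrix (Fin K) (Fin K) ℝ} (hM : M.IsHermitian)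
    {ρ : ℝ} (hρ : ∀ i, ρ ≤ hM.eigenvalues i) (x : Fin K → ℝ) :
    ρ * (x ⬝ᵥ x) ≤ x ⬝ᵥ (M *ᵥ x) := by
  classical
  set U : Matrix (Fin K) (Fin K) ℝ := ↑(hM.eigenvectorUnitary) with hUdef
  have hUU : U * star U = 1 := Matrix.mem_unitaryGroup_iff.mp hM.eigenvectorUnitary.2
  have hsU : star U = Uᵀ := by
    rw [Matrix.star_eq_conjTranspose, Matrix.conjTranspose_eq_transpose_of_trivial]
  have hxx : x ⬝ᵥ x = (Uᵀ *ᵥ x) ⬝ᵥ (Uᵀ *ᵥ x) := by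
    rw [dot_mulVec_mulVec, Matrix.transpose_transpose, ← hsU, hUU, Matrix.one_mulVec]
  have hDz : x ⬝ᵥ (M *ᵥ x) = ∑ i, hM.eigenvalues i * (Uᵀ *ᵥ x) i ^ 2 := by
    conv_lhs => rw [hM.spectral_theorem]
    rw [Unitary.conjStarAlgAut_apply, ← hUdef, hsU, ← Matrix.mulVec_mulVec, ← Matrix.mulVec_mulVec, Matrix.dotProduct_mulVec x,
      ← Matrix.mulVec_transpose]
    simp only [dotProduct, Matrix.mulVec_diagonal, RCLike.ofReal_real_eq_id,
      Function.comp_apply, id_eq]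
    exact Finset.sum_congr rfl fun i _ => by ring
  rw [hxx, hDz]
  simp only [dotProduct]
  rw [Finset.mul_sum]
  exact Finset.sum_le_sum fun i _ => by
    rw [pow_two]
    exact mul_le_mul_of_nonneg_right (hρ i) (mul_self_nonneg _)

private lemma det_isUnit_of_eig_pos {K : ℕ} {M : Matrix (Fin K) (Fin K) ℝ} (hM : M.IsHermitian)
    (h : ∀ i, 0 < hM.eigenvalues i) : IsUnit M.det := by
  rw [isUnit_iff_ne_zero, hM.det_eq_prod_eigenvalues]
  have h1 : (0:ℝ) < ∏ i, hM.eigenvalues i := Finset.prod_pos fun i _ => h i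
  simpa [RCLike.ofReal_real_eq_id] using h1.ne'

private lemma rpow_diff_le {B A ν : ℝ} (hB : 0 < B) (hA : 0 ≤ A) (hν0 : 0 < ν) (hν1 : ν < 1) :
    B ^ ν - A ^ ν ≤ B ^ (ν - 1) * |B - A| := by
  rcases le_or_gt B A with h | h
  · have h1 : B ^ ν ≤ A ^ ν := Real.rpow_le_rpow hB.le h hν0.le
    have h2 : 0 ≤ B ^ (ν - 1) * |B - A| :=
      mul_nonneg (Real.rpow_nonneg hB.le _) (abs_nonneg _)
    linarith
  · rw [abs_of_pos (by linarith)]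
    have key : B ^ (ν - 1) * A ≤ A ^ ν := by
      rcases hA.eq_or_lt with rfl | hA0
      · simp [Real.zero_rpow hν0.ne']
      · have h1 : B ^ (ν - 1) ≤ A ^ (ν - 1) :=
          Real.rpow_le_rpow_of_nonpos hA0 h.le (by linarith)
        calc B ^ (ν - 1) * A ≤ A ^ (ν - 1) * A := mul_le_mul_of_nonneg_right h1 hA
          _ = A ^ ν := by rw [← Real.rpow_add_one hA0.ne']; ring_nf
    have hBν : B ^ (ν - 1) * B = B ^ ν := by rw [← Real.rpow_add_one hB.ne']; ring_nf
    nlinarith [key, hBν]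

set_option maxHeartbeats 2000000 in
private lemma pointwise_bound
    {N K S : ℕ} (Ψ : Matrix (Fin N) (Fin K) ℝ) (G : Fin S → Finset (Fin K)) (c : Fin S → ℝ)
    (hc : ∀ g, 0 < c g) {ν : ℝ} (hν0 : 0 < ν) (hν1 : ν < 1)
    {lam₁ : ℝ} (hlam₁ : 0 ≤ lam₁) {lam₂ : ℝ}
    (R : Matrix (Fin K) (Fin K) ℝ)
    {ρ : ℝ} (hρpos : 0 < ρ)
    (hpart : ∀ f : Fin K → ℝ, ∑ g, ∑ i ∈ G g, f i = ∑ i, f i)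
    (hquad : ∀ x : Fin K → ℝ, ρ * (x ⬝ᵥ x) ≤ x ⬝ᵥ ((Ψᵀ * Ψ + lam₂ • R) *ᵥ x))
    (hsym : ∀ u v : Fin K → ℝ,
      u ⬝ᵥ ((Ψᵀ * Ψ + lam₂ • R) *ᵥ v) = v ⬝ᵥ ((Ψᵀ * Ψ + lam₂ • R) *ᵥ u))
    (γstar : Fin K → ℝ) (η : ℝ) (e : Fin N → ℝ) (yω : Fin N → ℝ)
    (hyω : yω = Ψ *ᵥ γstar + e)
    (γh bω : Fin K → ℝ)
    (hMb : (Ψᵀ * Ψ + lam₂ • R) *ᵥ bω = Ψᵀ *ᵥ yω)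
    (hminb : (yω - Ψ *ᵥ γh) ⬝ᵥ (yω - Ψ *ᵥ γh)
        + lam₁ * ∑ g, c g * (∑ i ∈ G g, |γh i|) ^ ν
        + lam₂ * (γh ⬝ᵥ R *ᵥ γh)
      ≤ (yω - Ψ *ᵥ bω) ⬝ᵥ (yω - Ψ *ᵥ bω)
        + lam₁ * ∑ g, c g * (∑ i ∈ G g, |bω i|) ^ ν
        + lam₂ * (bω ⬝ᵥ R *ᵥ bω))
    (hη1 : Real.sqrt (∑ g, ((G g).card : ℝ) * c g ^ 2 *
        (∑ i ∈ G g, |bω i|) ^ (2 * (ν - 1))) ≤ η)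
    (hη2 : ∀ g, ∃ i ∈ G g, bω i ≠ 0) :
    (γh - γstar) ⬝ᵥ (γh - γstar) ≤
      2 * lam₁ ^ 2 * η ^ 2 / ρ ^ 2
      + 4 * lam₂ ^ 2 * ((R *ᵥ γstar) ⬝ᵥ (R *ᵥ γstar)) / ρ ^ 2
      + (4 / ρ ^ 2) * ∑ j, (∑ i, Ψ i j * e i) ^ 2 := by
  classical
  have hdot : ∀ v : Fin K → ℝ, v ⬝ᵥ v = ∑ i, v i ^ 2 := fun v => by
    simp [dotProduct, pow_two]
  -- quadratic identity
  have hQ : ∀ γ : Fin K → ℝ,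
      (yω - Ψ *ᵥ γ) ⬝ᵥ (yω - Ψ *ᵥ γ) + lam₂ * (γ ⬝ᵥ R *ᵥ γ)
        = (γ - bω) ⬝ᵥ ((Ψᵀ * Ψ + lam₂ • R) *ᵥ (γ - bω))
          + (yω ⬝ᵥ yω - bω ⬝ᵥ ((Ψᵀ * Ψ + lam₂ • R) *ᵥ bω)) := by
    intro γ
    have e1 : γ ⬝ᵥ ((Ψᵀ * Ψ + lam₂ • R) *ᵥ γ)
        = (Ψ *ᵥ γ) ⬝ᵥ (Ψ *ᵥ γ) + lam₂ * (γ ⬝ᵥ (R *ᵥ γ)) := by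
      rw [Matrix.add_mulVec, dotProduct_add, Matrix.smul_mulVec,
        dotProduct_smul, smul_eq_mul, ← dot_mulVec_mulVec]
    have e2 : γ ⬝ᵥ ((Ψᵀ * Ψ + lam₂ • R) *ᵥ bω) = yω ⬝ᵥ (Ψ *ᵥ γ) := by
      rw [hMb, Matrix.dotProduct_mulVec γ, Matrix.vecMul_transpose, dotProduct_comm]
    have e3 : (yω - Ψ *ᵥ γ) ⬝ᵥ (yω - Ψ *ᵥ γ)
        = yω ⬝ᵥ yω - 2 * (yω ⬝ᵥ (Ψ *ᵥ γ)) + (Ψ *ᵥ γ) ⬝ᵥ (Ψ *ᵥ γ) := by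
      rw [dotProduct_sub, sub_dotProduct, sub_dotProduct,
        dotProduct_comm (Ψ *ᵥ γ) yω]
      ring
    have e4 : (γ - bω) ⬝ᵥ ((Ψᵀ * Ψ + lam₂ • R) *ᵥ (γ - bω))
        = γ ⬝ᵥ ((Ψᵀ * Ψ + lam₂ • R) *ᵥ γ) - 2 * (γ ⬝ᵥ ((Ψᵀ * Ψ + lam₂ • R) *ᵥ bω))
          + bω ⬝ᵥ ((Ψᵀ * Ψ + lam₂ • R) *ᵥ bω) := by
      rw [Matrix.mulVec_sub, dotProduct_sub, sub_dotProduct,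
        sub_dotProduct, hsym bω γ]
      ring
    linear_combination e3 - e4 - e1 + 2 * e2
  have hAnn : ∀ g, (0:ℝ) ≤ ∑ i ∈ G g, |γh i| := fun g => Finset.sum_nonneg fun i _ => abs_nonneg _
  have hBpos : ∀ g, (0:ℝ) < ∑ i ∈ G g, |bω i| := fun g => by
    obtain ⟨i, hiG, hne⟩ := hη2 g
    have h1 : |bω i| ≤ ∑ i ∈ G g, |bω i| :=
      Finset.single_le_sum (f := fun k => |bω k|) (fun j _ => abs_nonneg _) hiG
    have h2 := abs_pos.mpr hne
    linarith
  have step1 : (γh - bω) ⬝ᵥ ((Ψᵀ * Ψ + lam₂ • R) *ᵥ (γh - bω))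
      ≤ lam₁ * (∑ g, c g * (∑ i ∈ G g, |bω i|) ^ ν - ∑ g, c g * (∑ i ∈ G g, |γh i|) ^ ν) := by
    have h1 := hQ γh
    have h2 := hQ bω
    have h3 : (bω - bω) ⬝ᵥ ((Ψᵀ * Ψ + lam₂ • R) *ᵥ (bω - bω)) = 0 := by
      simp [sub_self]
    linarith [hminb]
  have step2 : ∑ g, c g * (∑ i ∈ G g, |bω i|) ^ ν - ∑ g, c g * (∑ i ∈ G g, |γh i|) ^ ν
      ≤ ∑ g, (c g * (∑ i ∈ G g, |bω i|) ^ (ν - 1)) * (∑ i ∈ G g, |bω i - γh i|) := by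
    rw [← Finset.sum_sub_distrib]
    refine Finset.sum_le_sum fun g _ => ?_
    have h1 : (∑ i ∈ G g, |bω i|) ^ ν - (∑ i ∈ G g, |γh i|) ^ ν
        ≤ (∑ i ∈ G g, |bω i|) ^ (ν - 1) * abs ((∑ i ∈ G g, |bω i|) - ∑ i ∈ G g, |γh i|) :=
      rpow_diff_le (hBpos g) (hAnn g) hν0 hν1
    have h2 : abs ((∑ i ∈ G g, |bω i|) - ∑ i ∈ G g, |γh i|) ≤ ∑ i ∈ G g, |bω i - γh i| := by
      rw [← Finset.sum_sub_distrib]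
      refine (Finset.abs_sum_le_sum_abs _ _).trans ?_
      exact Finset.sum_le_sum fun i _ => abs_abs_sub_abs_le_abs_sub _ _
    have hBν : (0:ℝ) ≤ (∑ i ∈ G g, |bω i|) ^ (ν - 1) := Real.rpow_nonneg (hBpos g).le _
    have h4 := mul_le_mul_of_nonneg_left h2 hBν
    calc c g * (∑ i ∈ G g, |bω i|) ^ ν - c g * (∑ i ∈ G g, |γh i|) ^ ν
        = c g * ((∑ i ∈ G g, |bω i|) ^ ν - (∑ i ∈ G g, |γh i|) ^ ν) := by ring
      _ ≤ c g * ((∑ i ∈ G g, |bω i|) ^ (ν - 1) * (∑ i ∈ G g, |bω i - γh i|)) :=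
          mul_le_mul_of_nonneg_left (h1.trans h4) (hc g).le
      _ = (c g * (∑ i ∈ G g, |bω i|) ^ (ν - 1)) * (∑ i ∈ G g, |bω i - γh i|) := by ring
  have hsqW : ∀ g, (∑ i ∈ G g, |bω i - γh i|) ≤
      Real.sqrt ((G g).card) * Real.sqrt (∑ i ∈ G g, (bω i - γh i) ^ 2) := by
    intro g
    have h1 : (∑ i ∈ G g, |bω i - γh i|) ^ 2 ≤ ((G g).card : ℝ) * ∑ i ∈ G g, (bω i - γh i) ^ 2 := by
      have h0 := sq_sum_le_card_mul_sum_sq (s := G g) (f := fun i => |bω i - γh i|)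
      simpa [sq_abs] using h0
    have h2 : (0:ℝ) ≤ ∑ i ∈ G g, |bω i - γh i| := Finset.sum_nonneg fun i _ => abs_nonneg _
    calc (∑ i ∈ G g, |bω i - γh i|) = Real.sqrt ((∑ i ∈ G g, |bω i - γh i|) ^ 2) :=
          (Real.sqrt_sq h2).symm
      _ ≤ Real.sqrt (((G g).card : ℝ) * ∑ i ∈ G g, (bω i - γh i) ^ 2) := Real.sqrt_le_sqrt h1
      _ = _ := Real.sqrt_mul (Nat.cast_nonneg _) _
  have hW : ∑ g, ∑ i ∈ G g, (bω i - γh i) ^ 2 = (γh - bω) ⬝ᵥ (γh - bω) := by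
    rw [hpart (fun i => (bω i - γh i) ^ 2), hdot]
    exact Finset.sum_congr rfl fun i _ => by simp [Pi.sub_apply]; ring
  have step3 : ∑ g, (c g * (∑ i ∈ G g, |bω i|) ^ (ν - 1)) * (∑ i ∈ G g, |bω i - γh i|)
      ≤ η * Real.sqrt ((γh - bω) ⬝ᵥ (γh - bω)) := by
    calc ∑ g, (c g * (∑ i ∈ G g, |bω i|) ^ (ν - 1)) * (∑ i ∈ G g, |bω i - γh i|)
        ≤ ∑ g, (c g * (∑ i ∈ G g, |bω i|) ^ (ν - 1) * Real.sqrt ((G g).card))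
            * Real.sqrt (∑ i ∈ G g, (bω i - γh i) ^ 2) := by
          refine Finset.sum_le_sum fun g _ => ?_
          have hn : (0:ℝ) ≤ c g * (∑ i ∈ G g, |bω i|) ^ (ν - 1) :=
            mul_nonneg (hc g).le (Real.rpow_nonneg (hBpos g).le _)
          calc (c g * (∑ i ∈ G g, |bω i|) ^ (ν - 1)) * (∑ i ∈ G g, |bω i - γh i|)
              ≤ (c g * (∑ i ∈ G g, |bω i|) ^ (ν - 1)) *
                (Real.sqrt ((G g).card) * Real.sqrt (∑ i ∈ G g, (bω i - γh i) ^ 2)) :=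
                mul_le_mul_of_nonneg_left (hsqW g) hn
            _ = _ := by ring
      _ ≤ Real.sqrt (∑ g, (c g * (∑ i ∈ G g, |bω i|) ^ (ν - 1) * Real.sqrt ((G g).card)) ^ 2)
            * Real.sqrt (∑ g, (Real.sqrt (∑ i ∈ G g, (bω i - γh i) ^ 2)) ^ 2) :=
          sum_mul_le_sqrt_mul_sqrt _ _ _
      _ ≤ η * Real.sqrt ((γh - bω) ⬝ᵥ (γh - bω)) := by
          have e5 : ∑ g, (c g * (∑ i ∈ G g, |bω i|) ^ (ν - 1) * Real.sqrt ((G g).card)) ^ 2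
              = ∑ g, ((G g).card : ℝ) * c g ^ 2 * (∑ i ∈ G g, |bω i|) ^ (2 * (ν - 1)) := by
            refine Finset.sum_congr rfl fun g _ => ?_
            have h6 : ((∑ i ∈ G g, |bω i|) ^ (ν - 1 : ℝ)) ^ (2:ℕ)
                = (∑ i ∈ G g, |bω i|) ^ (2 * (ν - 1) : ℝ) := by
              rw [← Real.rpow_natCast ((∑ i ∈ G g, |bω i|) ^ (ν - 1 : ℝ)) 2,
                ← Real.rpow_mul (hBpos g).le]
              norm_num [mul_comm]
            rw [mul_pow, mul_pow, Real.sq_sqrt (Nat.cast_nonneg _), h6]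
            ring
          have e6 : ∑ g, (Real.sqrt (∑ i ∈ G g, (bω i - γh i) ^ 2)) ^ 2
              = (γh - bω) ⬝ᵥ (γh - bω) := by
            rw [← hW]
            exact Finset.sum_congr rfl fun g _ =>
              Real.sq_sqrt (Finset.sum_nonneg fun i _ => sq_nonneg _)
          rw [e5, e6]
          exact mul_le_mul_of_nonneg_right hη1 (Real.sqrt_nonneg _)
  -- bound on the penalized error
  have hub : (γh - bω) ⬝ᵥ (γh - bω) ≤ lam₁ ^ 2 * η ^ 2 / ρ ^ 2 := by
    have hdd : (0:ℝ) ≤ (γh - bω) ⬝ᵥ (γh - bω) := dot_self_nonneg _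
    have ht2 : Real.sqrt ((γh - bω) ⬝ᵥ (γh - bω)) ^ 2 = (γh - bω) ⬝ᵥ (γh - bω) :=
      Real.sq_sqrt hdd
    have hηnn : 0 ≤ η := le_trans (Real.sqrt_nonneg _) hη1
    have hchain : ρ * Real.sqrt ((γh - bω) ⬝ᵥ (γh - bω)) ^ 2
        ≤ lam₁ * η * Real.sqrt ((γh - bω) ⬝ᵥ (γh - bω)) := by
      rw [ht2]
      calc ρ * ((γh - bω) ⬝ᵥ (γh - bω))
          ≤ (γh - bω) ⬝ᵥ ((Ψᵀ * Ψ + lam₂ • R) *ᵥ (γh - bω)) := hquad _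
        _ ≤ lam₁ * (∑ g, c g * (∑ i ∈ G g, |bω i|) ^ ν
              - ∑ g, c g * (∑ i ∈ G g, |γh i|) ^ ν) := step1
        _ ≤ lam₁ * (η * Real.sqrt ((γh - bω) ⬝ᵥ (γh - bω))) :=
            mul_le_mul_of_nonneg_left (step2.trans step3) hlam₁
        _ = lam₁ * η * Real.sqrt ((γh - bω) ⬝ᵥ (γh - bω)) := by ring
    rw [le_div_iff₀ (by positivity), ← ht2]
    nlinarith [mul_le_mul_of_nonneg_left hchain hρpos.le,
      sq_nonneg (ρ * Real.sqrt ((γh - bω) ⬝ᵥ (γh - bω)) - lam₁ * η),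
      Real.sqrt_nonneg ((γh - bω) ⬝ᵥ (γh - bω)),
      mul_nonneg (mul_nonneg hlam₁ hηnn) (Real.sqrt_nonneg ((γh - bω) ⬝ᵥ (γh - bω)))]
  -- ridge estimator error
  have hMv : (Ψᵀ * Ψ + lam₂ • R) *ᵥ (bω - γstar)
      = Ψᵀ *ᵥ e - lam₂ • (R *ᵥ γstar) := by
    rw [Matrix.mulVec_sub, hMb, hyω, Matrix.mulVec_add, Matrix.add_mulVec,
      Matrix.mulVec_mulVec, Matrix.smul_mulVec]
    abel
  have hub2 : (bω - γstar) ⬝ᵥ (bω - γstar)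
      ≤ (2 * (∑ j, (∑ i, Ψ i j * e i) ^ 2)
         + 2 * lam₂ ^ 2 * ((R *ᵥ γstar) ⬝ᵥ (R *ᵥ γstar))) / ρ ^ 2 := by
    have hvv : (0:ℝ) ≤ (bω - γstar) ⬝ᵥ (bω - γstar) := dot_self_nonneg _
    have hww : (0:ℝ) ≤ (Ψᵀ *ᵥ e - lam₂ • (R *ᵥ γstar)) ⬝ᵥ (Ψᵀ *ᵥ e - lam₂ • (R *ᵥ γstar)) :=
      dot_self_nonneg _
    have hCS : (bω - γstar) ⬝ᵥ ((Ψᵀ * Ψ + lam₂ • R) *ᵥ (bω - γstar))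
        ≤ Real.sqrt ((bω - γstar) ⬝ᵥ (bω - γstar)) *
          Real.sqrt ((Ψᵀ *ᵥ e - lam₂ • (R *ᵥ γstar)) ⬝ᵥ (Ψᵀ *ᵥ e - lam₂ • (R *ᵥ γstar))) := by
      rw [hMv]
      have h0 := sum_mul_le_sqrt_mul_sqrt Finset.univ (fun i => (bω - γstar) i)
        (fun i => (Ψᵀ *ᵥ e - lam₂ • (R *ᵥ γstar)) i)
      simpa [dotProduct, pow_two] using h0
    have hwq : (Ψᵀ *ᵥ e - lam₂ • (R *ᵥ γstar)) ⬝ᵥ (Ψᵀ *ᵥ e - lam₂ • (R *ᵥ γstar))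
        ≤ 2 * (∑ j, (∑ i, Ψ i j * e i) ^ 2)
          + 2 * lam₂ ^ 2 * ((R *ᵥ γstar) ⬝ᵥ (R *ᵥ γstar)) := by
      have hTj : ∀ j, (Ψᵀ *ᵥ e) j = ∑ i, Ψ i j * e i := fun j => by
        simp [Matrix.mulVec, dotProduct, Matrix.transpose_apply]
      rw [hdot]
      calc ∑ jj, ((Ψᵀ *ᵥ e - lam₂ • (R *ᵥ γstar)) jj) ^ 2
          ≤ ∑ jj, (2 * ((Ψᵀ *ᵥ e) jj) ^ 2 + 2 * lam₂ ^ 2 * ((R *ᵥ γstar) jj) ^ 2) := by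
            refine Finset.sum_le_sum fun jj _ => ?_
            have h8 : (Ψᵀ *ᵥ e - lam₂ • (R *ᵥ γstar)) jj
                = (Ψᵀ *ᵥ e) jj - lam₂ * (R *ᵥ γstar) jj := by
              simp [Pi.sub_apply, Pi.smul_apply, smul_eq_mul]
            rw [h8]
            nlinarith [sq_nonneg ((Ψᵀ *ᵥ e) jj + lam₂ * (R *ᵥ γstar) jj)]
        _ = 2 * (∑ j, (∑ i, Ψ i j * e i) ^ 2)
            + 2 * lam₂ ^ 2 * ((R *ᵥ γstar) ⬝ᵥ (R *ᵥ γstar)) := by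
            have h7 : ∑ jj, ((Ψᵀ *ᵥ e) jj) ^ 2 = ∑ j, (∑ i, Ψ i j * e i) ^ 2 :=
              Finset.sum_congr rfl fun j _ => by rw [hTj]
            rw [Finset.sum_add_distrib, ← Finset.mul_sum, ← Finset.mul_sum, h7,
              hdot (R *ᵥ γstar)]
    have hs2 : Real.sqrt ((bω - γstar) ⬝ᵥ (bω - γstar)) ^ 2 = (bω - γstar) ⬝ᵥ (bω - γstar) :=
      Real.sq_sqrt hvv
    have hsw : Real.sqrt ((Ψᵀ *ᵥ e - lam₂ • (R *ᵥ γstar)) ⬝ᵥ (Ψᵀ *ᵥ e - lam₂ • (R *ᵥ γstar))) ^ 2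
        = (Ψᵀ *ᵥ e - lam₂ • (R *ᵥ γstar)) ⬝ᵥ (Ψᵀ *ᵥ e - lam₂ • (R *ᵥ γstar)) :=
      Real.sq_sqrt hww
    have hq := hquad (bω - γstar)
    rw [le_div_iff₀ (by positivity), ← hs2]
    nlinarith [mul_le_mul_of_nonneg_left (hq.trans hCS) hρpos.le,
      sq_nonneg (ρ * Real.sqrt ((bω - γstar) ⬝ᵥ (bω - γstar))
        - Real.sqrt ((Ψᵀ *ᵥ e - lam₂ • (R *ᵥ γstar)) ⬝ᵥ (Ψᵀ *ᵥ e - lam₂ • (R *ᵥ γstar)))),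
      Real.sqrt_nonneg ((bω - γstar) ⬝ᵥ (bω - γstar)),
      Real.sqrt_nonneg ((Ψᵀ *ᵥ e - lam₂ • (R *ᵥ γstar)) ⬝ᵥ (Ψᵀ *ᵥ e - lam₂ • (R *ᵥ γstar))),
      hwq, hsw, hs2, hρpos]
  -- combine
  have hfinal : (γh - γstar) ⬝ᵥ (γh - γstar)
      ≤ 2 * ((γh - bω) ⬝ᵥ (γh - bω)) + 2 * ((bω - γstar) ⬝ᵥ (bω - γstar)) := by
    simp only [hdot]
    rw [Finset.mul_sum, Finset.mul_sum, ← Finset.sum_add_distrib]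
    refine Finset.sum_le_sum fun i _ => ?_
    simp only [Pi.sub_apply]
    nlinarith [sq_nonneg ((γh i - bω i) - (bω i - γstar i))]
  have h12 := add_le_add (mul_le_mul_of_nonneg_left hub (by norm_num : (0:ℝ) ≤ 2))
    (mul_le_mul_of_nonneg_left hub2 (by norm_num : (0:ℝ) ≤ 2))
  refine hfinal.trans (h12.trans_eq ?_)
  ring

set_option maxHeartbeats 2000000 in
/-- Theorem 1 of the paper (consistency of the group bridge penalized estimator), in
finite-dimensional matrix form.  With `M = ΨᵀΨ + λ₂R` having smallest eigenvalue
`ρ_min > 0`, data `y = Ψγ* + ε` with independent square-integrable mean-zero noise of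
variance `σ²`, a measurable `γ̂` that a.s. minimizes
`L_y(γ) = ‖y − Ψγ‖₂² + λ₁ ∑ g c_g ‖γ_g‖₁^ν + λ₂ γᵀRγ`, and a constant `η` with
`(∑ g d_g c_g² ‖b_g‖₁^{2(ν−1)})^{1/2} ≤ η` and all blocks of the ridge estimator `b`
nonzero a.s., one has
`E‖γ̂ − γ*‖₂² ≤ (8λ₁²η² + 4λ₂²‖Rγ*‖₂² + 4σ²‖Ψ‖_F²)/ρ_min²`. -/
theorem group_bridge_consistency
    {Ω : Type*} [MeasurableSpace Ω] (P : Measure Ω) [IsProbabilityMeasure P]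
    {N K S : ℕ} (Ψ : Matrix (Fin N) (Fin K) ℝ)
    (gr : Fin K → Fin S) (c : Fin S → ℝ) (hc : ∀ g, 0 < c g)
    (ν : ℝ) (hν : ν ∈ Set.Ioo (0 : ℝ) 1)
    (lam₁ : ℝ) (hlam₁ : 0 ≤ lam₁) (lam₂ : ℝ) (hlam₂ : 0 ≤ lam₂)
    (R : Matrix (Fin K) (Fin K) ℝ) (hR : R.PosSemidef)
    (hM : (Ψᵀ * Ψ + lam₂ • R).IsHermitian)
    (ρmin : ℝ) (hρ : IsLeast (Set.range hM.eigenvalues) ρmin) (hρpos : 0 < ρmin)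
    (γstar : Fin K → ℝ) (σ η : ℝ) (ε : Fin N → Ω → ℝ)
    (hmeas : ∀ i, Measurable (ε i))
    (hindep : iIndepFun ε P)
    (hL2 : ∀ i, MemLp (ε i) 2 P)
    (hmean : ∀ i, ∫ ω, ε i ω ∂P = 0)
    (hvar : ∀ i, ∫ ω, (ε i ω) ^ 2 ∂P = σ ^ 2)
    (y : Ω → Fin N → ℝ) (hy : ∀ ω, y ω = Ψ.mulVec γstar + fun i => ε i ω)
    (L : (Fin N → ℝ) → (Fin K → ℝ) → ℝ)
    (hL : ∀ z γ, L z γ = (z - Ψ.mulVec γ) ⬝ᵥ (z - Ψ.mulVec γ) +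
      lam₁ * ∑ g, c g * (∑ i ∈ Finset.univ.filter (fun i => gr i = g), |γ i|) ^ ν +
      lam₂ * (γ ⬝ᵥ R.mulVec γ))
    (γhat : Ω → Fin K → ℝ) (hγhat_meas : Measurable γhat)
    (hmin : ∀ᵐ ω ∂P, ∀ γ, L (y ω) (γhat ω) ≤ L (y ω) γ)
    (b : Ω → Fin K → ℝ)
    (hb : ∀ ω, b ω = ((Ψᵀ * Ψ + lam₂ • R)⁻¹).mulVec (Ψᵀ.mulVec (y ω)))
    (hη : ∀ᵐ ω ∂P,
      Real.sqrt (∑ g, ((Finset.univ.filter (fun i => gr i = g)).card : ℝ) * (c g) ^ 2 *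
        (∑ i ∈ Finset.univ.filter (fun i => gr i = g), |b ω i|) ^ (2 * (ν - 1))) ≤ η ∧
      ∀ g, ∃ i, gr i = g ∧ b ω i ≠ 0) :
    ∫ ω, (γhat ω - γstar) ⬝ᵥ (γhat ω - γstar) ∂P ≤
      (8 * lam₁ ^ 2 * η ^ 2 + 4 * lam₂ ^ 2 * (R.mulVec γstar ⬝ᵥ R.mulVec γstar) +
        4 * σ ^ 2 * ∑ i, ∑ j, (Ψ i j) ^ 2) / ρmin ^ 2 := by
  classical
  obtain ⟨hν0, hν1⟩ := hν
  -- matrix facts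
  have heig : ∀ i, ρmin ≤ hM.eigenvalues i := fun i => hρ.2 ⟨i, rfl⟩
  have hquad : ∀ x : Fin K → ℝ, ρmin * (x ⬝ᵥ x) ≤ x ⬝ᵥ ((Ψᵀ * Ψ + lam₂ • R) *ᵥ x) :=
    fun x => quad_lower_bound hM heig x
  have hdet : IsUnit (Ψᵀ * Ψ + lam₂ • R).det :=
    det_isUnit_of_eig_pos hM fun i => lt_of_lt_of_le hρpos (heig i)
  have hMsymT : (Ψᵀ * Ψ + lam₂ • R)ᵀ = Ψᵀ * Ψ + lam₂ • R := by
    have h := hM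
    rwa [Matrix.IsHermitian, Matrix.conjTranspose_eq_transpose_of_trivial] at h
  have hsym : ∀ u v : Fin K → ℝ,
      u ⬝ᵥ ((Ψᵀ * Ψ + lam₂ • R) *ᵥ v) = v ⬝ᵥ ((Ψᵀ * Ψ + lam₂ • R) *ᵥ u) := by
    intro u v
    rw [Matrix.dotProduct_mulVec, ← Matrix.mulVec_transpose, hMsymT, dotProduct_comm]
  have hMb : ∀ ω, (Ψᵀ * Ψ + lam₂ • R) *ᵥ b ω = Ψᵀ *ᵥ y ω := fun ω => by
    rw [hb ω, Matrix.mulVec_mulVec, Matrix.mul_nonsing_inv _ hdet, Matrix.one_mulVec]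
  have hpart : ∀ f : Fin K → ℝ,
      ∑ g, ∑ i ∈ Finset.univ.filter (fun i => gr i = g), f i = ∑ i, f i := fun f =>
    Finset.sum_fiberwise_of_maps_to (fun i _ => Finset.mem_univ _) f
  -- pointwise bound, almost everywhere
  have hptw : ∀ᵐ ω ∂P, (γhat ω - γstar) ⬝ᵥ (γhat ω - γstar) ≤
      2 * lam₁ ^ 2 * η ^ 2 / ρmin ^ 2
      + 4 * lam₂ ^ 2 * ((R *ᵥ γstar) ⬝ᵥ (R *ᵥ γstar)) / ρmin ^ 2
      + (4 / ρmin ^ 2) * ∑ j, (∑ i, Ψ i j * ε i ω) ^ 2 := by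
    filter_upwards [hmin, hη] with ω hminω hηω
    have hminb := hminω (b ω)
    rw [hL, hL] at hminb
    refine pointwise_bound Ψ (fun g => Finset.univ.filter (fun i => gr i = g)) c hc hν0 hν1
      hlam₁ R hρpos hpart hquad hsym γstar η (fun i => ε i ω) (y ω) (hy ω)
      (γhat ω) (b ω) (hMb ω) hminb hηω.1 ?_
    intro g
    obtain ⟨i, hig, hne⟩ := hηω.2 g
    exact ⟨i, Finset.mem_filter.mpr ⟨Finset.mem_univ _, hig⟩, hne⟩
  -- integrability facts
  have hTmem : ∀ j : Fin K, MemLp (fun ω => ∑ i, Ψ i j * ε i ω) 2 P := fun j =>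
    memLp_finset_sum Finset.univ fun i _ => (hL2 i).const_mul (Ψ i j)
  have hTsq_int : ∀ j : Fin K, Integrable (fun ω => (∑ i, Ψ i j * ε i ω) ^ 2) P := fun j =>
    (hTmem j).integrable_sq
  have hmul_int : ∀ i k : Fin N, Integrable (fun ω => ε i ω * ε k ω) P := by
    intro i k
    by_cases h : i = k
    · subst h; simpa [pow_two] using (hL2 i).integrable_sq
    · exact (hindep.indepFun h).integrable_mul ((hL2 i).integrable one_le_two)
        ((hL2 k).integrable one_le_two)
  have hcross : ∀ i k : Fin N, i ≠ k → ∫ ω, ε i ω * ε k ω ∂P = 0 := by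
    intro i k h
    have h2 := (hindep.indepFun h).integral_mul_eq_mul_integral (hmeas i).aestronglyMeasurable
      (hmeas k).aestronglyMeasurable
    calc ∫ ω, ε i ω * ε k ω ∂P = ∫ ω, (ε i * ε k) ω ∂P := rfl
      _ = (∫ ω, ε i ω ∂P) * ∫ ω, ε k ω ∂P := h2
      _ = 0 := by rw [hmean i, hmean k]; ring
  have hTint : ∀ j : Fin K, ∫ ω, (∑ i, Ψ i j * ε i ω) ^ 2 ∂P = σ ^ 2 * ∑ i, Ψ i j ^ 2 := by
    intro j
    have hexp : ∀ ω : Ω, (∑ i, Ψ i j * ε i ω) ^ 2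
        = ∑ i, ∑ k, Ψ i j * Ψ k j * (ε i ω * ε k ω) := by
      intro ω
      rw [pow_two, Finset.sum_mul_sum]
      exact Finset.sum_congr rfl fun i _ => Finset.sum_congr rfl fun k _ => by ring
    calc ∫ ω, (∑ i, Ψ i j * ε i ω) ^ 2 ∂P
        = ∫ ω, ∑ i, ∑ k, Ψ i j * Ψ k j * (ε i ω * ε k ω) ∂P := by
          simp_rw [hexp]
      _ = ∑ i, ∑ k, Ψ i j * Ψ k j * ∫ ω, ε i ω * ε k ω ∂P := by
          rw [integral_finset_sum _ fun i _ =>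
            integrable_finset_sum _ fun k _ => (hmul_int i k).const_mul _]
          refine Finset.sum_congr rfl fun i _ => ?_
          rw [integral_finset_sum _ fun k _ => (hmul_int i k).const_mul _]
          exact Finset.sum_congr rfl fun k _ => integral_const_mul _ _
      _ = ∑ i, Ψ i j ^ 2 * σ ^ 2 := by
          refine Finset.sum_congr rfl fun i _ => ?_
          rw [Finset.sum_eq_single i]
          · have hv : ∫ ω, ε i ω * ε i ω ∂P = σ ^ 2 := by
              simpa [pow_two] using hvar i
            rw [hv]; ring
          · intro k _ hk
            rw [hcross i k fun hh => hk hh.symm, mul_zero]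
          · intro hni; exact absurd (Finset.mem_univ i) hni
      _ = σ ^ 2 * ∑ i, Ψ i j ^ 2 := by
          rw [Finset.mul_sum]
          exact Finset.sum_congr rfl fun i _ => mul_comm _ _
  have hgint : Integrable (fun ω => 2 * lam₁ ^ 2 * η ^ 2 / ρmin ^ 2
      + 4 * lam₂ ^ 2 * ((R *ᵥ γstar) ⬝ᵥ (R *ᵥ γstar)) / ρmin ^ 2
      + (4 / ρmin ^ 2) * ∑ j, (∑ i, Ψ i j * ε i ω) ^ 2) P := by
    exact (integrable_const _).add
      ((integrable_finset_sum _ fun j _ => hTsq_int j).const_mul _)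
  have hval : ∫ ω, (2 * lam₁ ^ 2 * η ^ 2 / ρmin ^ 2
      + 4 * lam₂ ^ 2 * ((R *ᵥ γstar) ⬝ᵥ (R *ᵥ γstar)) / ρmin ^ 2
      + (4 / ρmin ^ 2) * ∑ j, (∑ i, Ψ i j * ε i ω) ^ 2) ∂P
      = 2 * lam₁ ^ 2 * η ^ 2 / ρmin ^ 2
        + 4 * lam₂ ^ 2 * ((R *ᵥ γstar) ⬝ᵥ (R *ᵥ γstar)) / ρmin ^ 2
        + (4 / ρmin ^ 2) * (σ ^ 2 * ∑ j : Fin K, ∑ i, Ψ i j ^ 2) := by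
    rw [integral_add (integrable_const _)
      ((integrable_finset_sum _ fun j _ => hTsq_int j).const_mul _),
      integral_const, integral_const_mul, integral_finset_sum _ fun j _ => hTsq_int j]
    have hsum : ∑ j : Fin K, ∫ ω, (∑ i, Ψ i j * ε i ω) ^ 2 ∂P
        = σ ^ 2 * ∑ j : Fin K, ∑ i, Ψ i j ^ 2 := by
      rw [Finset.mul_sum]
      exact Finset.sum_congr rfl fun j _ => hTint j
    rw [hsum]
    simp [measure_univ]
  have h0 : 0 ≤ᵐ[P] fun ω => (γhat ω - γstar) ⬝ᵥ (γhat ω - γstar) :=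
    Filter.Eventually.of_forall fun ω => dot_self_nonneg _
  have hle := integral_mono_of_nonneg h0 hgint hptw
  rw [hval] at hle
  refine hle.trans ?_
  have hF : ∑ j : Fin K, ∑ i, Ψ i j ^ 2 = ∑ i, ∑ j, Ψ i j ^ 2 := Finset.sum_comm
  rw [hF]
  have hid : 2 * lam₁ ^ 2 * η ^ 2 / ρmin ^ 2
      + 4 * lam₂ ^ 2 * ((R *ᵥ γstar) ⬝ᵥ (R *ᵥ γstar)) / ρmin ^ 2
      + (4 / ρmin ^ 2) * (σ ^ 2 * ∑ i, ∑ j, Ψ i j ^ 2)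
      = (2 * lam₁ ^ 2 * η ^ 2 + 4 * lam₂ ^ 2 * ((R *ᵥ γstar) ⬝ᵥ (R *ᵥ γstar))
        + 4 * σ ^ 2 * ∑ i, ∑ j, Ψ i j ^ 2) / ρmin ^ 2 := by ring
  rw [hid]
  have hρ2 : (0:ℝ) < ρmin ^ 2 := by positivity
  rw [div_le_div_iff₀ hρ2 hρ2]
  nlinarith [sq_nonneg (lam₁ * η), sq_nonneg ρmin, hρ2]
end
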